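/- Let w : ℕ → ℝ be a weight sequence satisfying the density condition and let N : ℕ → ℝ be coefficients. If the radius of convergence R = sup { y ≥ 0 : the series ∑_k N k · y^(w k) converges } is strictly positive, then the capacity C = limsup_{k→∞} (ln (N k))/(w k) equals −ln R. -/

import Mathlib

set_option maxHeartbeats 1000000

/-- A weight sequence: strictly increasing and nonnegative. -/
def IsWeightSeq (w : ℕ → ℝ) : Prop :=
  StrictMono w ∧ ∀ k, 0 ≤ w k

/-- The density condition: the number of indices `k` with `w k < n` is at most `L * n ^ K`. -/
def DensityCond (w : ℕ → ℝ) : Prop :=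
  ∃ L K : ℝ, 0 ≤ L ∧ 0 ≤ K ∧ ∀ n : ℕ,
    {k : ℕ | w k < (n : ℝ)}.Finite ∧
    ((Set.ncard {k : ℕ | w k < (n : ℝ)} : ℝ) ≤ L * (n : ℝ) ^ K)

open Filter

lemma key_summable (w : ℕ → ℝ) (hw0 : ∀ k, 0 ≤ w k) (hdens : DensityCond w)
    {q : ℝ} (hq0 : 0 < q) (hq1 : q < 1) : Summable (fun k => q ^ w k) := by
  obtain ⟨L, K, hL, hK, hd⟩ := hdens
  set K' : ℕ := ⌈K⌉₊ with hK'
  have hgs : Summable (fun n : ℕ => L * ((n : ℝ) + 1) ^ K' * q ^ n) := by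
    have h1 : Summable (fun n : ℕ => (n : ℝ) ^ K' * q ^ n) :=
      summable_pow_mul_geometric_of_norm_lt_one K' (by rwa [Real.norm_eq_abs, abs_of_pos hq0])
    have h2 : Summable (fun n : ℕ => ((n + 1 : ℕ) : ℝ) ^ K' * q ^ (n + 1)) :=
      (summable_nat_add_iff 1).2 h1
    have h3 : Summable (fun n : ℕ => ((n : ℝ) + 1) ^ K' * q ^ n) := by
      have := h2.mul_left q⁻¹
      refine this.congr fun n => ?_
      push_cast
      rw [pow_succ]
      field_simp
    exact (h3.mul_left L).congr fun n => (mul_assoc L _ _).symm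
  apply summable_of_sum_le (c := ∑' n : ℕ, L * ((n : ℝ) + 1) ^ K' * q ^ n)
  · intro k
    positivity
  · intro u
    set g : ℕ → ℕ := fun k => ⌊w k⌋₊ with hg
    calc ∑ k ∈ u, q ^ w k ≤ ∑ k ∈ u, q ^ (g k : ℝ) := by
          refine Finset.sum_le_sum fun k _ => ?_
          exact Real.rpow_le_rpow_of_exponent_ge hq0 hq1.le (Nat.floor_le (hw0 k))
      _ = ∑ k ∈ u, q ^ (g k) := by
          refine Finset.sum_congr rfl fun k _ => ?_
          rw [Real.rpow_natCast]
      _ = ∑ n ∈ u.image g, ∑ k ∈ u.filter (fun k => g k = n), q ^ (g k) :=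
          (Finset.sum_fiberwise_of_maps_to (fun k hk => Finset.mem_image_of_mem g hk) _).symm
      _ ≤ ∑ n ∈ u.image g, L * ((n : ℝ) + 1) ^ K' * q ^ n := by
          refine Finset.sum_le_sum fun n _ => ?_
          have hcongr : ∑ k ∈ u.filter (fun k => g k = n), q ^ (g k)
              = (u.filter (fun k => g k = n)).card * q ^ n := by
            rw [Finset.sum_congr rfl fun k hk => by
              rw [(Finset.mem_filter.1 hk).2]]
            simp [Finset.sum_const, nsmul_eq_mul]
          rw [hcongr]
          have hsub : (↑(u.filter (fun k => g k = n)) : Set ℕ) ⊆ {k : ℕ | w k < ((n + 1 : ℕ) : ℝ)} := by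
            intro k hk
            simp only [Finset.coe_filter, Set.mem_setOf_eq] at hk ⊢
            push_cast
            rw [← hk.2]
            exact Nat.lt_floor_add_one (w k)
          have hcard : ((u.filter (fun k => g k = n)).card : ℝ)
              ≤ L * ((n : ℝ) + 1) ^ K := by
            have h1 := (hd (n + 1)).1
            have h2 := (hd (n + 1)).2
            have := Set.ncard_le_ncard hsub h1
            rw [Set.ncard_coe_finset] at this
            calc ((u.filter (fun k => g k = n)).card : ℝ)
                ≤ (Set.ncard {k : ℕ | w k < ((n + 1 : ℕ) : ℝ)} : ℝ) := by exact_mod_cast this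
              _ ≤ L * ((n + 1 : ℕ) : ℝ) ^ K := h2
              _ = L * ((n : ℝ) + 1) ^ K := by push_cast; ring
          have hpow : ((n : ℝ) + 1) ^ K ≤ ((n : ℝ) + 1) ^ K' := by
            rw [← Real.rpow_natCast ((n : ℝ) + 1) K']
            exact Real.rpow_le_rpow_of_exponent_le (by linarith [Nat.cast_nonneg (α := ℝ) n]) (Nat.le_ceil K)
          have hqn : (0 : ℝ) ≤ q ^ n := by positivity
          calc ((u.filter (fun k => g k = n)).card : ℝ) * q ^ n
              ≤ (L * ((n : ℝ) + 1) ^ K) * q ^ n := mul_le_mul_of_nonneg_right hcard hqn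
            _ ≤ L * ((n : ℝ) + 1) ^ K' * q ^ n := by
                exact mul_le_mul_of_nonneg_right (mul_le_mul_of_nonneg_left hpow hL) hqn
      _ ≤ ∑' n : ℕ, L * ((n : ℝ) + 1) ^ K' * q ^ n := by
          refine Summable.sum_le_tsum _ (fun n _ => by positivity) hgs

theorem capacity_eq_neg_log_radius (w N : ℕ → ℝ)
    (hw : IsWeightSeq w) (hdens : DensityCond w)
    (hN : ∀ k, 1 ≤ N k)
    (R : ℝ) (hR : R = sSup {y : ℝ | 0 ≤ y ∧ Summable (fun k => N k * y ^ (w k))})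
    (hRpos : 0 < R) :
    Filter.atTop.limsup (fun k => Real.log (N k) / w k) = -Real.log R := by
  obtain ⟨hwmono, hw0⟩ := hw
  set S := {y : ℝ | 0 ≤ y ∧ Summable (fun k => N k * y ^ (w k))} with hS
  -- the weights tend to infinity
  have hwtop : Tendsto w atTop atTop := by
    rw [tendsto_atTop]
    intro b
    obtain ⟨L, K, hL, hK, hd⟩ := hdens
    obtain ⟨m, hm⟩ := (hd ⌈b⌉₊).1.bddAbove
    filter_upwards [eventually_gt_atTop m] with k hk
    by_contra h
    push_neg at h
    have hmem : k ∈ {j : ℕ | w j < ((⌈b⌉₊ : ℕ) : ℝ)} :=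
      Set.mem_setOf_eq ▸ lt_of_lt_of_le h (Nat.le_ceil b)
    exact absurd (hm hmem) (not_le.2 hk)
  have hwpos : ∀ᶠ k in atTop, 0 < w k := hwtop.eventually_gt_atTop 0
  -- 0 ∈ S
  have h0S : (0 : ℝ) ∈ S := by
    refine ⟨le_refl 0, summable_of_ne_finset_zero (s := {0}) fun k hk => ?_⟩
    simp only [Finset.mem_singleton] at hk
    have hwk : 0 < w k := lt_of_le_of_lt (hw0 0) (hwmono (Nat.pos_of_ne_zero hk))
    simp [Real.zero_rpow hwk.ne']
  -- S is bounded above by 1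
  have hSbdd : BddAbove S := by
    refine ⟨1, fun y hy => ?_⟩
    by_contra h
    push_neg at h
    have h0 := hy.2.tendsto_atTop_zero
    have hge : ∀ k, (1 : ℝ) ≤ N k * y ^ w k := fun k => by
      have h1 : (1 : ℝ) ≤ y ^ w k := Real.one_le_rpow h.le (hw0 k)
      calc (1 : ℝ) = 1 * 1 := by ring
        _ ≤ N k * y ^ w k := mul_le_mul (hN k) h1 zero_le_one (le_trans zero_le_one (hN k))
    have : (1 : ℝ) ≤ 0 := ge_of_tendsto' h0 hge
    linarith
  -- eventual upper bound from membership in S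
  have hub : ∀ y ∈ S, 0 < y →
      ∀ᶠ k in atTop, Real.log (N k) / w k ≤ -Real.log y := by
    intro y hy hy0
    have h0 := hy.2.tendsto_atTop_zero
    have hev : ∀ᶠ k in atTop, N k * y ^ w k < 1 := h0.eventually_lt_const one_pos
    filter_upwards [hev, hwpos] with k h1 hk
    have hNk : (0 : ℝ) < N k := lt_of_lt_of_le one_pos (hN k)
    have hyp : (0 : ℝ) < y ^ w k := Real.rpow_pos_of_pos hy0 _
    have hlog : Real.log (N k * y ^ w k) ≤ 0 :=
      Real.log_nonpos (by positivity) h1.le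
    rw [Real.log_mul hNk.ne' hyp.ne', Real.log_rpow hy0] at hlog
    rw [div_le_iff₀ hk]
    nlinarith
  -- some positive element of S close to R
  obtain ⟨y₀, hy₀S, hy₀⟩ : ∃ y ∈ S, R / 2 < y := by
    apply exists_lt_of_lt_csSup ⟨0, h0S⟩
    rw [← hR]; linarith
  have hy₀0 : 0 < y₀ := lt_of_le_of_lt (by linarith) hy₀
  have hbddabove : IsBoundedUnder (· ≤ ·) atTop (fun k => Real.log (N k) / w k) :=
    ⟨-Real.log y₀, hub y₀ hy₀S hy₀0⟩
  have hbddbelow : IsBoundedUnder (· ≥ ·) atTop (fun k => Real.log (N k) / w k) := by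
    refine ⟨0, eventually_map.2 ?_⟩
    filter_upwards [hwpos] with k hk
    have : (0 : ℝ) ≤ Real.log (N k) := Real.log_nonneg (hN k)
    positivity
  have hcobdd : IsCoboundedUnder (· ≤ ·) atTop (fun k => Real.log (N k) / w k) :=
    hbddbelow.isCoboundedUnder_le
  -- direction 1 : limsup ≤ -log R
  have hle : Filter.atTop.limsup (fun k => Real.log (N k) / w k) ≤ -Real.log R := by
    refine le_of_forall_gt_imp_ge_of_dense fun a ha => ?_
    -- -log R < a, so exp (-a) < R; pick y ∈ S with exp (-a) < y
    have hea : Real.exp (-a) < R := by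
      rw [← Real.exp_log hRpos]
      exact Real.exp_lt_exp.2 (by linarith)
    obtain ⟨y, hyS, hy⟩ : ∃ y ∈ S, Real.exp (-a) < y := by
      apply exists_lt_of_lt_csSup ⟨0, h0S⟩
      rwa [← hR]
    have hy0 : 0 < y := lt_trans (Real.exp_pos _) hy
    have h1 := limsup_le_of_le hcobdd (hub y hyS hy0)
    refine h1.trans ?_
    have : -a < Real.log y := by
      rw [← Real.log_exp (-a)]
      exact Real.log_lt_log (Real.exp_pos _) hy
    linarith
  -- direction 2 : -log R ≤ limsup
  have hge : -Real.log R ≤ Filter.atTop.limsup (fun k => Real.log (N k) / w k) := by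
    refine le_of_forall_gt_imp_ge_of_dense fun c hc => ?_
    obtain ⟨c', hc1, hc2⟩ := exists_between hc
    have hev : ∀ᶠ k in atTop, Real.log (N k) / w k < c' :=
      eventually_lt_of_limsup_lt hc1 hbddabove
    have hq1 : Real.exp (c' - c) < 1 := by
      rw [Real.exp_lt_one_iff]; linarith
    obtain ⟨m, hm⟩ := eventually_atTop.1 (hev.and hwpos)
    have hsum : Summable (fun k => N k * (Real.exp (-c)) ^ w k) := by
      rw [← summable_nat_add_iff m]
      have hqs : Summable (fun k => Real.exp (c' - c) ^ w (k + m)) :=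
        (summable_nat_add_iff m).2 (key_summable w hw0 hdens (Real.exp_pos _) hq1)
      refine hqs.of_nonneg_of_le (fun k => ?_) (fun k => ?_)
      · have : (0 : ℝ) < N (k + m) := lt_of_lt_of_le one_pos (hN _)
        have : (0 : ℝ) ≤ Real.exp (-c) ^ w (k + m) := (Real.rpow_pos_of_pos (Real.exp_pos _) _).le
        positivity
      · obtain ⟨h1, h2⟩ := hm (k + m) (Nat.le_add_left m k)
        have hNk : (0 : ℝ) < N (k + m) := lt_of_lt_of_le one_pos (hN _)
        have hN' : N (k + m) ≤ Real.exp (c' * w (k + m)) := by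
          rw [div_lt_iff₀ h2] at h1
          calc N (k + m) = Real.exp (Real.log (N (k + m))) := (Real.exp_log hNk).symm
            _ ≤ Real.exp (c' * w (k + m)) := Real.exp_le_exp.2 h1.le
        have hexp : ∀ a : ℝ, Real.exp a ^ w (k + m) = Real.exp (a * w (k + m)) := fun a => by
          rw [Real.rpow_def_of_pos (Real.exp_pos a), Real.log_exp]
        calc N (k + m) * Real.exp (-c) ^ w (k + m)
            ≤ Real.exp (c' * w (k + m)) * Real.exp (-c) ^ w (k + m) :=
              mul_le_mul_of_nonneg_right hN' (Real.rpow_pos_of_pos (Real.exp_pos _) _).le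
          _ = Real.exp (c' - c) ^ w (k + m) := by
              rw [hexp, hexp, ← Real.exp_add]
              ring_nf
    have hmem : Real.exp (-c) ∈ S := ⟨(Real.exp_pos _).le, hsum⟩
    have hle' : Real.exp (-c) ≤ R := hR ▸ le_csSup hSbdd hmem
    have : -c ≤ Real.log R := by
      rw [← Real.log_exp (-c)]
      exact (Real.log_le_log_iff (Real.exp_pos _) hRpos).2 hle'
    linarith
  exact le_antisymm hle hge
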